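/- For any integers s ≥ 1 and s_1, ..., s_r ≥ 1 with s_1 ≤ ⋯ ≤ s_r, the Mordell-Tornheim series MT(s_1, ..., s_r | s) = ∑_{n_1,...,n_r ≥ 1} 1/(n_1^{s_1} ⋯ n_r^{s_r}(n_1+⋯+n_r)^s) converges, and its value is a ℤ-linear combination of multiple zeta values of weight s + s_1 + ⋯ + s_r and depth r. -/

import Mathlib

/-- The summand of the Mordell–Tornheim series. -/
noncomputable def MTterm (r : ℕ) (s' : Fin r → ℕ) (s : ℕ) (n : Fin r → ℕ) : ℝ :=
  1 / ((∏ i, ((n i : ℝ) + 1) ^ s' i) * (∑ i, ((n i : ℝ) + 1)) ^ s)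

/-- The multiple zeta value `ζ(k_0,…,k_{r-1}) = ∑_{m_0 > m_1 > ⋯ > m_{r-1} ≥ 1}
∏ m_i^{-k_i}`, parametrised by `m i = ∑_{j ≥ i} (a j + 1)`. -/
noncomputable def MZV (r : ℕ) (k : Fin r → ℕ) : ℝ :=
  ∑' a : Fin r → ℕ, ∏ i, ((∑ j ∈ Finset.Ici i, ((a j : ℝ) + 1)) ^ k i)⁻¹

open Finset


noncomputable def Fp (a b : ℕ) (m z : ℝ) : ℝ :=
  ∑ i ∈ range a, ((b + i - 1).choose i : ℝ) * ((m ^ (a - i)) * z ^ (b + i))⁻¹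

lemma Fp_zero_right (a : ℕ) (ha : 1 ≤ a) (m z : ℝ) : Fp a 0 m z = (m ^ a)⁻¹ := by
  rw [Fp, Finset.sum_eq_single_of_mem 0 (mem_range.2 ha)]
  · simp
  · intro i _ hi
    have : i - 1 < i := by omega
    simp [Nat.choose_eq_zero_of_lt this]

lemma Fp_rec (a b : ℕ) (ha : 1 ≤ a) (hb : 1 ≤ b) (m z : ℝ) (hz : z ≠ 0) :
    Fp a b m z = z⁻¹ * (Fp (a - 1) b m z + Fp a (b - 1) m z) := by
  obtain ⟨a', rfl⟩ : ∃ a', a = a' + 1 := ⟨a - 1, by omega⟩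
  obtain ⟨b', rfl⟩ : ∃ b', b = b' + 1 := ⟨b - 1, by omega⟩
  have key : ∀ (c : ℝ) (x y : ℕ), z⁻¹ * (c * ((m ^ x) * z ^ y)⁻¹) = c * ((m ^ x) * z ^ (y + 1))⁻¹ := by
    intro c x y
    rw [pow_succ, mul_inv, mul_inv, mul_inv]; ring
  simp only [Nat.add_sub_cancel]
  rw [Fp, Fp, Fp, Finset.sum_range_succ' _ a',
    Finset.sum_range_succ' (fun i => ((b' + i - 1).choose i : ℝ) * ((m ^ (a' + 1 - i)) * z ^ (b' + i))⁻¹) a']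
  have expand : z⁻¹ * ((∑ i ∈ range a', ((b' + 1 + i - 1).choose i : ℝ) * ((m ^ (a' - i)) * z ^ (b' + 1 + i))⁻¹)
      + ((∑ k ∈ range a', ((b' + (k + 1) - 1).choose (k + 1) : ℝ) * ((m ^ (a' + 1 - (k + 1))) * z ^ (b' + (k + 1)))⁻¹)
        + ((b' + 0 - 1).choose 0 : ℝ) * ((m ^ (a' + 1 - 0)) * z ^ (b' + 0))⁻¹))
      = (∑ k ∈ range a',
          (z⁻¹ * (((b' + 1 + k - 1).choose k : ℝ) * ((m ^ (a' - k)) * z ^ (b' + 1 + k))⁻¹)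
          + z⁻¹ * (((b' + (k + 1) - 1).choose (k + 1) : ℝ) * ((m ^ (a' + 1 - (k + 1))) * z ^ (b' + (k + 1)))⁻¹)))
        + z⁻¹ * (((b' + 0 - 1).choose 0 : ℝ) * ((m ^ (a' + 1 - 0)) * z ^ (b' + 0))⁻¹) := by
    rw [Finset.sum_add_distrib, ← Finset.mul_sum, ← Finset.mul_sum]; ring
  rw [expand]
  congr 1
  · apply Finset.sum_congr rfl
    intro k _
    have e1 : b' + 1 + (k + 1) - 1 = b' + k + 1 := by omega
    have e2 : b' + 1 + k - 1 = b' + k := by omega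
    have e3 : b' + (k + 1) - 1 = b' + k := by omega
    have e4 : a' + 1 - (k + 1) = a' - k := by omega
    have e5 : b' + (k + 1) + 1 = b' + 1 + (k + 1) := by omega
    have e6 : b' + 1 + k + 1 = b' + 1 + (k + 1) := by omega
    rw [e1, e2, e3, e4, key, key, e5, e6, ← add_mul, Nat.choose_succ_succ (b' + k) k]
    push_cast
    ring
  · have e1 : b' + 0 - 1 = b' - 1 := by omega
    have e2 : b' + 1 + 0 - 1 = b' := by omega
    rw [e1, e2, key]
    norm_num

lemma euler_pf (a b : ℕ) (hab : 1 ≤ a + b) (m n : ℝ) (hm : 0 < m) (hn : 0 < n) :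
    (m ^ a * n ^ b)⁻¹ = Fp a b m (m + n) + Fp b a n (m + n) := by
  have hz : m + n ≠ 0 := by positivity
  have H : ∀ N : ℕ, ∀ a b : ℕ, 1 ≤ a + b → a + b = N →
      (m ^ a * n ^ b)⁻¹ = Fp a b m (m + n) + Fp b a n (m + n) := by
    intro N
    induction N using Nat.strong_induction_on with
    | _ N IH =>
      intro a b hab hN
      rcases Nat.eq_zero_or_pos b with hb | hb
      · subst hb
        have ha : 1 ≤ a := by omega
        rw [Fp_zero_right a ha, Fp]
        simp
      rcases Nat.eq_zero_or_pos a with ha | ha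
      · subst ha
        rw [Fp_zero_right b hb, Fp]
        simp [add_comm m n]
      have IH1 : (m ^ (a - 1) * n ^ b)⁻¹ = Fp (a - 1) b m (m + n) + Fp b (a - 1) n (m + n) :=
        IH (a - 1 + b) (by omega) (a - 1) b (by omega) rfl
      have IH2 : (m ^ a * n ^ (b - 1))⁻¹ = Fp a (b - 1) m (m + n) + Fp (b - 1) a n (m + n) :=
        IH (a + (b - 1)) (by omega) a (b - 1) (by omega) rfl
      have step : (m ^ a * n ^ b)⁻¹ = (m + n)⁻¹ * ((m ^ (a - 1) * n ^ b)⁻¹ + (m ^ a * n ^ (b - 1))⁻¹) := by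
        obtain ⟨a', rfl⟩ : ∃ a', a = a' + 1 := ⟨a - 1, by omega⟩
        obtain ⟨b', rfl⟩ : ∃ b', b = b' + 1 := ⟨b - 1, by omega⟩
        simp only [Nat.add_sub_cancel]
        have hm' : m ≠ 0 := ne_of_gt hm
        have hn' : n ≠ 0 := ne_of_gt hn
        field_simp
        ring
      rw [step, IH1, IH2, Fp_rec a b ha hb m _ hz, Fp_rec b a hb ha n _ hz]
      ring
  exact H (a + b) a b hab rfl



lemma summable_pi_prod : ∀ (r : ℕ) (f : Fin r → ℕ → ℝ), (∀ v, Summable (f v)) → (∀ v n, 0 ≤ f v n) →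
    Summable (fun x : Fin r → ℕ => ∏ v, f v (x v)) := by
  intro r
  induction r with
  | zero =>
    intro f _ _
    simp only [Finset.univ_eq_empty, Finset.prod_empty]
    exact summable_of_finite_support (Set.toFinite _)
  | succ r IH =>
    intro f hf h0
    have hs : Summable (fun p : ℕ × (Fin r → ℕ) => f 0 p.1 * ∏ v : Fin r, f v.succ (p.2 v)) :=
      Summable.mul_of_nonneg (g := fun x : Fin r → ℕ => ∏ v : Fin r, f v.succ (x v))
        (hf 0) (IH (fun v => f v.succ) (fun v => hf v.succ) (fun v => h0 v.succ))
        (fun n => h0 0 n) (fun x => Finset.prod_nonneg fun v _ => h0 v.succ (x v))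
    have einj : Function.Injective
        (fun x : Fin (r+1) → ℕ => ((x 0, fun v => x v.succ) : ℕ × (Fin r → ℕ))) := by
      intro x y h
      rw [Prod.mk.injEq] at h
      ext v
      rcases Fin.eq_zero_or_eq_succ v with rfl | ⟨w, rfl⟩
      · exact h.1
      · exact congrFun h.2 w
    have := hs.comp_injective einj
    refine this.congr fun x => ?_
    simp only [Function.comp]
    rw [Fin.prod_univ_succ]

lemma summable_one_add_rpow (p : ℝ) (hp : 1 < p) :
    Summable (fun n : ℕ => (((n : ℝ) + 1) ^ p)⁻¹) := by
  have h := (Real.summable_nat_rpow_inv (p := p)).2 hp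
  have := h.comp_injective (add_left_injective 1)
  refine this.congr fun n => ?_
  simp only [Function.comp]
  push_cast
  ring_nf


noncomputable def sg {r : ℕ} (A : Finset (Fin r)) (x : Fin r → ℕ) : ℝ :=
  ∑ v ∈ A, ((x v : ℝ) + 1)

noncomputable def Tm {r : ℕ} (D : Fin r → Finset (Fin r)) (k : Fin r → ℕ) (s : ℕ)
    (x : Fin r → ℕ) : ℝ :=
  (∏ v, sg (D v) x ^ k v)⁻¹ * (sg univ x ^ s)⁻¹

lemma sg_nonneg {r : ℕ} (A : Finset (Fin r)) (x : Fin r → ℕ) : 0 ≤ sg A x :=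
  Finset.sum_nonneg fun v _ => by positivity

lemma le_sg {r : ℕ} {A : Finset (Fin r)} {v : Fin r} (hv : v ∈ A) (x : Fin r → ℕ) :
    (x v : ℝ) + 1 ≤ sg A x := by
  rw [sg]
  exact Finset.single_le_sum (f := fun u => ((x u : ℝ) + 1)) (fun u _ => by positivity) hv

lemma one_le_sg {r : ℕ} {A : Finset (Fin r)} {v : Fin r} (hv : v ∈ A) (x : Fin r → ℕ) :
    (1 : ℝ) ≤ sg A x := by
  have h1 := le_sg hv x
  have h2 : (0:ℝ) ≤ (x v : ℝ) := Nat.cast_nonneg _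
  linarith

lemma sg_pos {r : ℕ} {A : Finset (Fin r)} {v : Fin r} (hv : v ∈ A) (x : Fin r → ℕ) :
    (0 : ℝ) < sg A x := lt_of_lt_of_le one_pos (one_le_sg hv x)

lemma Tm_nonneg {r : ℕ} (D : Fin r → Finset (Fin r)) (k : Fin r → ℕ) (s : ℕ) (x : Fin r → ℕ) :
    0 ≤ Tm D k s x := by
  unfold Tm
  have h1 : (0:ℝ) ≤ ∏ v, sg (D v) x ^ k v :=
    Finset.prod_nonneg fun v _ => pow_nonneg (sg_nonneg _ _) _
  have h2 : (0:ℝ) ≤ sg (univ : Finset (Fin r)) x ^ s := pow_nonneg (sg_nonneg _ _) _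
  exact mul_nonneg (inv_nonneg.2 h1) (inv_nonneg.2 h2)

lemma summable_Tm {r : ℕ} (hr : 1 ≤ r) (D : Fin r → Finset (Fin r)) (k : Fin r → ℕ) (s : ℕ)
    (hD : ∀ v, v ∈ D v) (hk : ∀ v, 1 ≤ k v) (hs : 1 ≤ s) :
    Summable (Tm D k s) := by
  have hrR : (0:ℝ) < (r : ℝ) := by exact_mod_cast Nat.pos_of_ne_zero (by omega)
  set p : ℝ := 1 + 1 / (r : ℝ) with hp
  have hp1 : 1 < p := by
    rw [hp]
    have : 0 < 1 / (r:ℝ) := by positivity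
    linarith
  refine Summable.of_nonneg_of_le (Tm_nonneg D k s) (fun x => ?_)
    (summable_pi_prod r (fun v n => (((n : ℝ) + 1) ^ p)⁻¹)
      (fun v => summable_one_add_rpow p hp1) (fun v n => by positivity))
  · 
    -- the bound
    set P : ℝ := ∏ v, ((x v : ℝ) + 1) with hPdef
    have hxpos : ∀ v, (0:ℝ) < (x v : ℝ) + 1 := fun v => by positivity
    have hP0 : 0 < P := Finset.prod_pos fun v _ => hxpos v
    have hP1 : 1 ≤ P := by
      rw [hPdef]
      calc (1:ℝ) = ∏ _v : Fin r, (1:ℝ) := by rw [Finset.prod_const_one]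
      _ ≤ ∏ v, ((x v : ℝ) + 1) := by
        apply Finset.prod_le_prod (fun v _ => zero_le_one)
        intro v _
        have h2 : (0:ℝ) ≤ (x v : ℝ) := Nat.cast_nonneg _
        linarith
    have hsgu : ∀ v : Fin r, sg (univ : Finset (Fin r)) x ≤ sg univ x ^ s :=
      fun v => le_self_pow₀ (one_le_sg (mem_univ v) x) (by omega)
    set v0 : Fin r := ⟨0, hr⟩
    have hA : P ≤ ∏ v, sg (D v) x ^ k v := by
      apply Finset.prod_le_prod (fun v _ => (hxpos v).le)
      intro v _
      calc ((x v : ℝ) + 1) ≤ sg (D v) x := le_sg (hD v) x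
      _ ≤ sg (D v) x ^ k v := le_self_pow₀ (one_le_sg (hD v) x) (by have := hk v; omega)
    have hB : sg (univ : Finset (Fin r)) x ≤ sg univ x ^ s := hsgu v0
    have hC : P ≤ sg (univ : Finset (Fin r)) x ^ r := by
      calc P ≤ ∏ _v : Fin r, sg (univ : Finset (Fin r)) x :=
            Finset.prod_le_prod (fun v _ => (hxpos v).le) (fun v _ => le_sg (mem_univ v) x)
      _ = sg univ x ^ r := by rw [Finset.prod_const, card_univ, Fintype.card_fin]
    have hroot : P ^ (1/(r:ℝ)) ≤ sg (univ : Finset (Fin r)) x := by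
      have h1 : P ^ (1/(r:ℝ)) ≤ (sg (univ : Finset (Fin r)) x ^ r) ^ (1/(r:ℝ)) :=
        Real.rpow_le_rpow hP0.le hC (by positivity)
      have h2 : (sg (univ : Finset (Fin r)) x ^ r) ^ (1/(r:ℝ)) = sg univ x := by
        rw [← Real.rpow_natCast (sg univ x) r, ← Real.rpow_mul (sg_nonneg _ _)]
        rw [mul_one_div, div_self (ne_of_gt hrR), Real.rpow_one]
      linarith
    have hprod : P ^ p ≤ (∏ v, sg (D v) x ^ k v) * (sg (univ : Finset (Fin r)) x ^ s) := by
      have : P ^ p = P * P ^ (1/(r:ℝ)) := by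
        rw [hp, Real.rpow_add hP0, Real.rpow_one]
      rw [this]
      apply mul_le_mul hA (le_trans hroot hB) (Real.rpow_nonneg hP0.le _)
      exact le_trans (le_trans zero_le_one hP1) hA
    have hbound : Tm D k s x ≤ (P ^ p)⁻¹ := by
      rw [Tm, ← mul_inv]
      apply inv_anti₀ (by positivity) hprod
    calc Tm D k s x ≤ (P ^ p)⁻¹ := hbound
    _ = ∏ v, (((x v : ℝ) + 1) ^ p)⁻¹ := by
      rw [← Real.finset_prod_rpow univ _ (fun v _ => (hxpos v).le) p, ← Finset.prod_inv_distrib]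


structure Nice {r : ℕ} (D : Fin r → Finset (Fin r)) : Prop where
  mem : ∀ v, v ∈ D v
  sub : ∀ u v, u ∈ D v → D u ⊆ D v
  lam : ∀ u v, D u ⊆ D v ∨ D v ⊆ D u ∨ Disjoint (D u) (D v)
  anti : ∀ u v, u ∈ D v → v ∈ D u → u = v

lemma Nice.eq_of_D_eq {r : ℕ} {D : Fin r → Finset (Fin r)} (h : Nice D) {u v : Fin r}
    (huv : D u = D v) : u = v :=
  h.anti u v (huv ▸ h.mem u) (huv ▸ h.mem v)

lemma Nice.exists_pair {r : ℕ} {D : Fin r → Finset (Fin r)} (h : Nice D)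
    (hnc : ¬ ∀ u v, D u ⊆ D v ∨ D v ⊆ D u) :
    ∃ u v, u ≠ v ∧ Disjoint (D u) (D v) ∧
      ∀ t, t ≠ u → t ≠ v → D t ⊆ D u ∨ D t ⊆ D v ∨ (D u ∪ D v) ⊆ D t ∨
        Disjoint (D t) (D u ∪ D v) := by
  push_neg at hnc
  obtain ⟨u0, v0, h1, h2⟩ := hnc
  have hd0 : Disjoint (D u0) (D v0) := by
    rcases h.lam u0 v0 with h' | h' | h'
    · exact absurd h' h1
    · exact absurd h' h2
    · exact h'
  set S : Finset (Fin r × Fin r) :=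
    univ.filter (fun p => Disjoint (D p.1) (D p.2)) with hS
  have hne : S.Nonempty := ⟨(u0, v0), by simp [hS, hd0]⟩
  obtain ⟨p, hpS, hpmax⟩ := S.exists_max_image (fun p => (D p.1).card + (D p.2).card) hne
  obtain ⟨u, v⟩ := p
  have hduv : Disjoint (D u) (D v) := by
    simp only [hS, mem_filter] at hpS
    exact hpS.2
  have huv : u ≠ v := by
    rintro rfl
    exact absurd (h.mem u) (Finset.disjoint_left.1 hduv (h.mem u))
  refine ⟨u, v, huv, hduv, ?_⟩
  intro t htu htv
  rcases h.lam t u with h1' | h1' | h1'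
  · exact Or.inl h1'
  · -- D u ⊆ D t
    rcases h.lam t v with h2' | h2' | h2'
    · -- D t ⊆ D v : then D u ⊆ D v, contradiction with disjoint nonempty
      exfalso
      have : u ∈ D v := h2' (h1' (h.mem u))
      exact absurd this (Finset.disjoint_left.1 hduv (h.mem u))
    · -- D v ⊆ D t too
      exact Or.inr (Or.inr (Or.inl (Finset.union_subset h1' h2')))
    · -- D u ⊆ D t, Disjoint (D t) (D v) : maximality
      exfalso
      have htS : (t, v) ∈ S := by simp [hS, h2']
      have hmax := hpmax (t, v) htS
      dsimp only at hmax
      have hcard : (D t).card ≤ (D u).card := by omega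
      have : D t = D u := Finset.eq_of_subset_of_card_le h1' hcard |>.symm
      exact htu (h.eq_of_D_eq this)
  · -- Disjoint (D t) (D u)
    rcases h.lam t v with h2' | h2' | h2'
    · exact Or.inr (Or.inl h2')
    · -- D v ⊆ D t, Disjoint (D t) (D u)
      exfalso
      have htS : (u, t) ∈ S := by simp [hS, h1'.symm]
      have hmax := hpmax (u, t) htS
      dsimp only at hmax
      have hcard : (D t).card ≤ (D v).card := by omega
      have : D t = D v := Finset.eq_of_subset_of_card_le h2' hcard |>.symm
      exact htv (h.eq_of_D_eq this)
    · exact Or.inr (Or.inr (Or.inr (Finset.disjoint_union_right.2 ⟨h1', h2'⟩)))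

lemma Nice.graft {r : ℕ} {D : Fin r → Finset (Fin r)} (h : Nice D) {u v : Fin r}
    (huv : u ≠ v) (hd : Disjoint (D u) (D v))
    (hprop : ∀ t, t ≠ u → t ≠ v → D t ⊆ D u ∨ D t ⊆ D v ∨ (D u ∪ D v) ⊆ D t ∨
      Disjoint (D t) (D u ∪ D v)) :
    Nice (Function.update D u (D u ∪ D v)) := by
  set D' := Function.update D u (D u ∪ D v) with hD'
  have hDu : D' u = D u ∪ D v := Function.update_self u _ D
  have hDt : ∀ t, t ≠ u → D' t = D t := fun t ht => Function.update_of_ne ht _ D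
  have hvnotinu : ∀ w, w ∈ D u → w ∉ D v := fun w hw => Finset.disjoint_left.1 hd hw
  -- key auxiliary: if u ∈ D w and w ≠ u then D u ∪ D v ⊆ D w
  have hkey : ∀ w, w ≠ u → u ∈ D w → D u ∪ D v ⊆ D w := by
    intro w hw hu
    have hsub : D u ⊆ D w := h.sub _ _ hu
    have hwv : w ≠ v := by
      rintro rfl
      exact hvnotinu u (h.mem u) hu
    rcases hprop w hw hwv with h' | h' | h' | h'
    · exfalso
      have : D w = D u := Finset.Subset.antisymm h' hsub
      exact hw (h.eq_of_D_eq this)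
    · exfalso
      exact hvnotinu u (h.mem u) (h' hu)
    · exact h'
    · exfalso
      exact (Finset.disjoint_left.1 h' hu) (Finset.mem_union_left _ (h.mem u))
  constructor
  · intro t
    by_cases ht : t = u
    · rw [ht, hDu]; exact Finset.mem_union_left _ (h.mem u)
    · rw [hDt t ht]; exact h.mem t
  · intro t w htw
    by_cases hw : w = u
    · rw [hw, hDu] at htw ⊢
      by_cases ht : t = u
      · rw [ht, hDu]
      · rw [hDt t ht]
        rcases Finset.mem_union.1 htw with h' | h'
        · exact (h.sub t u h').trans Finset.subset_union_left
        · exact (h.sub t _ h').trans Finset.subset_union_right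
    · rw [hDt w hw] at htw ⊢
      by_cases ht : t = u
      · rw [ht] at htw ⊢
        rw [hDu]
        exact hkey w hw htw
      · rw [hDt t ht]
        exact h.sub t w htw
  · intro t w
    by_cases ht : t = u <;> by_cases hw : w = u
    · rw [ht, hw]; exact Or.inl (Finset.Subset.refl _)
    · rw [ht, hDu, hDt w hw]
      by_cases hwv : w = v
      · rw [hwv]; exact Or.inr (Or.inl Finset.subset_union_right)
      rcases hprop w hw hwv with h' | h' | h' | h'
      · exact Or.inr (Or.inl (h'.trans Finset.subset_union_left))
      · exact Or.inr (Or.inl (h'.trans Finset.subset_union_right))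
      · exact Or.inl h'
      · exact Or.inr (Or.inr (Disjoint.symm h'))
    · rw [hw, hDu, hDt t ht]
      by_cases htv : t = v
      · rw [htv]; exact Or.inl Finset.subset_union_right
      rcases hprop t ht htv with h' | h' | h' | h'
      · exact Or.inl (h'.trans Finset.subset_union_left)
      · exact Or.inl (h'.trans Finset.subset_union_right)
      · exact Or.inr (Or.inl h')
      · exact Or.inr (Or.inr h')
    · rw [hDt t ht, hDt w hw]; exact h.lam t w
  · intro t w htw hwt
    by_cases ht : t = u <;> by_cases hw : w = u
    · rw [ht, hw]
    · rw [ht, hDu] at hwt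
      rw [ht] at htw ⊢
      rw [hDt w hw] at htw
      rcases Finset.mem_union.1 hwt with h' | h'
      · exact (h.anti w u h' htw).symm
      · exfalso
        have : u ∈ D v := h.sub _ _ h' htw
        exact hvnotinu u (h.mem u) this
    · rw [hw, hDu] at htw
      rw [hw] at hwt ⊢
      rw [hDt t ht] at hwt
      rcases Finset.mem_union.1 htw with h' | h'
      · exact h.anti t u h' hwt
      · exfalso
        have : u ∈ D v := h.sub _ _ h' hwt
        exact hvnotinu u (h.mem u) this
    · rw [hDt t ht] at hwt
      rw [hDt w hw] at htw
      exact h.anti t w htw hwt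

lemma Nice.chain {r : ℕ} {D : Fin r → Finset (Fin r)} (h : Nice D)
    (hc : ∀ u v, D u ⊆ D v ∨ D v ⊆ D u) :
    ∃ e : Fin r ≃ Fin r, ∀ i, D (e i) = (Finset.Ici i).image e := by
  have hcard1 : ∀ v, 1 ≤ (D v).card := fun v => Finset.card_pos.2 ⟨v, h.mem v⟩
  have hcardr : ∀ v, (D v).card ≤ r := fun v => by
    have := Finset.card_le_card (Finset.subset_univ (D v))
    simpa using this
  have hsub_iff : ∀ u w, D u ⊆ D w ↔ (D u).card ≤ (D w).card := by
    intro u w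
    constructor
    · exact Finset.card_le_card
    · intro hle
      rcases hc u w with h' | h'
      · exact h'
      · rw [Finset.eq_of_subset_of_card_le h' hle]
  have hr0 : ∀ v : Fin r, r - (D v).card < r := fun v => by
    have := hcard1 v; have := v.pos; omega
  set g : Fin r → Fin r := fun v => ⟨r - (D v).card, hr0 v⟩ with hg
  have ginj : Function.Injective g := by
    intro a b hab
    have h1 : r - (D a).card = r - (D b).card := congrArg Fin.val hab
    have h2 : (D a).card = (D b).card := by
      have := hcard1 a; have := hcard1 b; have := hcardr a; have := hcardr b; omega
    rcases hc a b with h' | h'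
    · exact h.eq_of_D_eq (Finset.eq_of_subset_of_card_le h' (le_of_eq h2.symm))
    · exact (h.eq_of_D_eq (Finset.eq_of_subset_of_card_le h' (le_of_eq h2))).symm
  have hbij : Function.Bijective g := Finite.injective_iff_bijective.1 ginj
  set E := Equiv.ofBijective g hbij with hE
  refine ⟨E.symm, ?_⟩
  have hge : ∀ i, g (E.symm i) = i := fun i => E.apply_symm_apply i
  have hgv : ∀ v, (g v).val = r - (D v).card := fun v => rfl
  have hcards : ∀ i : Fin r, (D (E.symm i)).card = r - i.val := by
    intro i
    have h1 : r - (D (E.symm i)).card = i.val := by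
      rw [← hgv (E.symm i), hge]
    have := hcard1 (E.symm i); have := hcardr (E.symm i)
    omega
  intro i
  ext w
  rw [Finset.mem_image]
  constructor
  · intro hw
    refine ⟨g w, ?_, ?_⟩
    · rw [Finset.mem_Ici, Fin.le_def]
      have hsub : D w ⊆ D (E.symm i) := h.sub _ _ hw
      have hle := (hsub_iff w (E.symm i)).1 hsub
      rw [hcards i] at hle
      have := hcard1 w; have := hcardr w
      have hgw : (g w).val = r - (D w).card := rfl
      have := i.isLt
      omega
    · exact E.symm_apply_apply w
  · rintro ⟨j, hj, rfl⟩
    rw [Finset.mem_Ici, Fin.le_def] at hj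
    have hle : (D (E.symm j)).card ≤ (D (E.symm i)).card := by
      rw [hcards i, hcards j]
      have := i.isLt; have := j.isLt
      omega
    exact ((hsub_iff _ _).2 hle) (h.mem (E.symm j))

lemma prod_split {r : ℕ} (f : Fin r → ℝ) {u w : Fin r} (huw : u ≠ w) :
    ∏ v, f v = f u * (f w * ∏ v ∈ (univ.erase u).erase w, f v) := by
  rw [← Finset.mul_prod_erase univ f (mem_univ u),
    ← Finset.mul_prod_erase (univ.erase u) f (Finset.mem_erase.2 ⟨huw.symm, mem_univ w⟩)]

lemma sg_union {r : ℕ} {A B : Finset (Fin r)} (hd : Disjoint A B) (x : Fin r → ℕ) :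
    sg (A ∪ B) x = sg A x + sg B x := by
  rw [sg, sg, sg, Finset.sum_union hd]

lemma Tm_step {r : ℕ} (s : ℕ) (D : Fin r → Finset (Fin r)) (k : Fin r → ℕ) {u w : Fin r}
    (huw : u ≠ w) (hd : Disjoint (D u) (D w)) (hu : u ∈ D u) (hw : w ∈ D w)
    (hku : 1 ≤ k u) (x : Fin r → ℕ) :
    Tm D k s x =
      (∑ i ∈ range (k u), ((k w + i - 1).choose i : ℝ) *
        Tm (Function.update D w (D u ∪ D w))
           (Function.update (Function.update k u (k u - i)) w (k w + i)) s x)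
    + (∑ i ∈ range (k w), ((k u + i - 1).choose i : ℝ) *
        Tm (Function.update D u (D u ∪ D w))
           (Function.update (Function.update k w (k w - i)) u (k u + i)) s x) := by
  set m := sg (D u) x with hm'
  set n := sg (D w) x with hn'
  set P := ∏ v ∈ (univ.erase u).erase w, sg (D v) x ^ k v with hP
  set Q := (sg (univ : Finset (Fin r)) x ^ s)⁻¹ with hQ
  have hm : 0 < m := sg_pos hu x
  have hn : 0 < n := sg_pos hw x
  have hz : sg (D u ∪ D w) x = m + n := sg_union hd x
  have herase : ∀ v, v ∈ (univ.erase u).erase w → v ≠ u ∧ v ≠ w := by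
    intro v hv
    rw [Finset.mem_erase, Finset.mem_erase] at hv
    exact ⟨hv.2.1, hv.1⟩
  have key1 : Tm D k s x = (m ^ k u * (n ^ k w * P))⁻¹ * Q := by
    rw [Tm, prod_split (fun v => sg (D v) x ^ k v) huw]
  have key2 : ∀ i, Tm (Function.update D w (D u ∪ D w))
      (Function.update (Function.update k u (k u - i)) w (k w + i)) s x
      = (m ^ (k u - i) * ((m + n) ^ (k w + i) * P))⁻¹ * Q := by
    intro i
    have h1 : sg ((Function.update D w (D u ∪ D w)) u) x ^
        (Function.update (Function.update k u (k u - i)) w (k w + i)) u = m ^ (k u - i) := by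
      rw [Function.update_of_ne huw, Function.update_of_ne huw, Function.update_self]
    have h2 : sg ((Function.update D w (D u ∪ D w)) w) x ^
        (Function.update (Function.update k u (k u - i)) w (k w + i)) w = (m + n) ^ (k w + i) := by
      rw [Function.update_self, Function.update_self, hz]
    have h3 : (∏ v ∈ (univ.erase u).erase w, sg ((Function.update D w (D u ∪ D w)) v) x ^
        (Function.update (Function.update k u (k u - i)) w (k w + i)) v) = P := by
      apply Finset.prod_congr rfl
      intro v hv
      obtain ⟨hvu, hvw⟩ := herase v hv
      rw [Function.update_of_ne hvw, Function.update_of_ne hvw, Function.update_of_ne hvu]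
    rw [Tm, prod_split (fun v => sg ((Function.update D w (D u ∪ D w)) v) x ^
        (Function.update (Function.update k u (k u - i)) w (k w + i)) v) huw, h1, h2, h3]
  have key3 : ∀ i, Tm (Function.update D u (D u ∪ D w))
      (Function.update (Function.update k w (k w - i)) u (k u + i)) s x
      = ((m + n) ^ (k u + i) * (n ^ (k w - i) * P))⁻¹ * Q := by
    intro i
    have h1 : sg ((Function.update D u (D u ∪ D w)) u) x ^
        (Function.update (Function.update k w (k w - i)) u (k u + i)) u = (m + n) ^ (k u + i) := by
      rw [Function.update_self, Function.update_self, hz]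
    have h2 : sg ((Function.update D u (D u ∪ D w)) w) x ^
        (Function.update (Function.update k w (k w - i)) u (k u + i)) w = n ^ (k w - i) := by
      rw [Function.update_of_ne huw.symm, Function.update_of_ne huw.symm, Function.update_self]
    have h3 : (∏ v ∈ (univ.erase u).erase w, sg ((Function.update D u (D u ∪ D w)) v) x ^
        (Function.update (Function.update k w (k w - i)) u (k u + i)) v) = P := by
      apply Finset.prod_congr rfl
      intro v hv
      obtain ⟨hvu, hvw⟩ := herase v hv
      rw [Function.update_of_ne hvu, Function.update_of_ne hvu, Function.update_of_ne hvw]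
    rw [Tm, prod_split (fun v => sg ((Function.update D u (D u ∪ D w)) v) x ^
        (Function.update (Function.update k w (k w - i)) u (k u + i)) v) huw, h1, h2, h3]
  rw [key1]
  simp only [key2, key3]
  have heuler := euler_pf (k u) (k w) (by omega) m n hm hn
  have expand : (m ^ k u * (n ^ k w * P))⁻¹ * Q = ((m ^ k u * n ^ k w)⁻¹) * (P⁻¹ * Q) := by
    rw [mul_inv, mul_inv]; ring
  rw [expand, heuler, add_mul, Fp, Fp, Finset.sum_mul, Finset.sum_mul]
  congr 1
  · apply Finset.sum_congr rfl
    intro i _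
    rw [mul_inv, mul_inv, mul_inv]
    ring
  · apply Finset.sum_congr rfl
    intro i _
    rw [mul_inv, mul_inv, mul_inv]
    ring

lemma Tm_chain {r : ℕ} (hr : 1 ≤ r) (s : ℕ) (D : Fin r → Finset (Fin r)) (k : Fin r → ℕ)
    (e : Fin r ≃ Fin r) (he : ∀ i, D (e i) = (Finset.Ici i).image e) :
    ∑' x, Tm D k s x
      = MZV r (fun i => k (e i) + if i = (⟨0, hr⟩ : Fin r) then s else 0) := by
  set i0 : Fin r := ⟨0, hr⟩ with hi0
  have hIci0 : (Finset.Ici i0 : Finset (Fin r)) = univ := by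
    ext j
    simp only [Finset.mem_Ici, Finset.mem_univ, iff_true]
    exact Fin.mk_le_of_le_val (Nat.zero_le _)
  have huniv : D (e i0) = univ := by
    rw [he i0, hIci0]
    ext u
    simp only [Finset.mem_image, Finset.mem_univ, iff_true]
    exact ⟨e.symm u, by simp⟩
  set Φ : (Fin r → ℕ) ≃ (Fin r → ℕ) := Equiv.arrowCongr e.symm (Equiv.refl ℕ) with hΦ
  have hΦx : ∀ (x : Fin r → ℕ) (j : Fin r), Φ x j = x (e j) := by
    intro x j
    simp [hΦ, Equiv.arrowCongr]
  rw [MZV]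
  refine Eq.trans (tsum_congr fun x => ?_)
    (Equiv.tsum_eq Φ (fun a => ∏ i, ((∑ j ∈ Finset.Ici i, ((a j : ℝ) + 1)) ^
      ((fun i => k (e i) + if i = i0 then s else 0) i))⁻¹))
  dsimp only
  set A : Fin r → ℝ := fun i => ∑ j ∈ Finset.Ici i, ((Φ x j : ℝ) + 1) with hAdef
  have hA : ∀ i : Fin r, sg (D (e i)) x = A i := by
    intro i
    rw [he i, sg, Finset.sum_image (fun a _ b _ h => e.injective h)]
    exact Finset.sum_congr rfl fun j _ => by rw [hΦx]
  have hU : sg (univ : Finset (Fin r)) x = A i0 := by rw [← huniv, hA]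
  rw [Tm, ← Equiv.prod_comp e (fun v => sg (D v) x ^ k v)]
  have hprodk : ∏ i, sg (D (e i)) x ^ k (e i) = ∏ i, A i ^ k (e i) :=
    Finset.prod_congr rfl fun i _ => by rw [hA]
  have hkey : ∏ i, A i ^ (k (e i) + if i = i0 then s else 0)
      = (∏ i, A i ^ k (e i)) * (A i0 ^ s) := by
    have h1 : ∀ i : Fin r, A i ^ (k (e i) + if i = i0 then s else 0)
        = A i ^ k (e i) * (if i = i0 then A i ^ s else 1) := by
      intro i
      rw [pow_add]
      congr 1
      split <;> simp
    rw [Finset.prod_congr rfl fun i _ => h1 i, Finset.prod_mul_distrib,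
      Finset.prod_ite_eq' univ i0 (fun i => A i ^ s), if_pos (Finset.mem_univ i0)]
  have hfin : (∏ i, ((A i) ^ (k (e i) + if i = i0 then s else 0))⁻¹)
      = (∏ i, A i ^ (k (e i) + if i = i0 then s else 0))⁻¹ := Finset.prod_inv_distrib _
  rw [hprodk, hU, hfin, hkey, mul_inv]


noncomputable def phi (r : ℕ) (c : (Fin r → ℕ) →₀ ℤ) : ℝ :=
  c.sum fun k' z => (z : ℝ) * MZV r k'

lemma phi_zero (r : ℕ) : phi r 0 = 0 := by
  rw [phi, Finsupp.sum_zero_index]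

lemma phi_add (r : ℕ) (a b : (Fin r → ℕ) →₀ ℤ) : phi r (a + b) = phi r a + phi r b := by
  rw [phi, phi, phi]
  exact Finsupp.sum_add_index' (fun k' => by simp) (fun k' z1 z2 => by push_cast; ring)

lemma phi_smul (r : ℕ) (z : ℤ) (a : (Fin r → ℕ) →₀ ℤ) : phi r (z • a) = (z : ℝ) * phi r a := by
  rw [phi, Finsupp.sum_smul_index (fun k' => by simp), phi, Finsupp.sum, Finsupp.sum,
    Finset.mul_sum]
  apply Finset.sum_congr rfl
  intro k' _
  push_cast
  ring

lemma phi_finsum (r : ℕ) (t : Finset ℕ) (g : ℕ → ((Fin r → ℕ) →₀ ℤ)) :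
    phi r (∑ i ∈ t, g i) = ∑ i ∈ t, phi r (g i) := by
  classical
  induction t using Finset.induction with
  | empty => simp [phi_zero]
  | insert _ _ hnotmem ih =>
    rw [Finset.sum_insert hnotmem, Finset.sum_insert hnotmem, phi_add, ih]

lemma reduce {r : ℕ} (hr : 1 ≤ r) (s : ℕ) (hs : 1 ≤ s) :
    ∀ (N : ℕ) (D : Fin r → Finset (Fin r)) (k : Fin r → ℕ),
      (∑ v, (D v).card) + N = r * r → Nice D → (∀ v, 1 ≤ k v) →
      ∃ c : ((Fin r → ℕ) →₀ ℤ),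
        (∀ k' ∈ c.support, 2 ≤ k' ⟨0, hr⟩ ∧ (∀ i, 1 ≤ k' i) ∧ ∑ i, k' i = s + ∑ v, k v) ∧
        (∑' x, Tm D k s x) = phi r c := by
  intro N
  induction N using Nat.strong_induction_on with
  | _ N IH =>
  intro D k hN hD hk
  by_cases hc : ∀ u v, D u ⊆ D v ∨ D v ⊆ D u
  · -- chain case
    obtain ⟨e, he⟩ := hD.chain hc
    set k' : Fin r → ℕ := fun i => k (e i) + if i = (⟨0, hr⟩ : Fin r) then s else 0 with hk'
    refine ⟨Finsupp.single k' 1, ?_, ?_⟩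
    · intro k'' hk''
      have hkk : k'' = k' := by
        have := Finsupp.support_single_subset hk''
        simpa [Finset.mem_singleton] using this
      subst hkk
      refine ⟨?_, ?_, ?_⟩
      · show 2 ≤ k (e ⟨0, hr⟩) + if (⟨0, hr⟩ : Fin r) = ⟨0, hr⟩ then s else 0
        rw [if_pos rfl]
        have := hk (e ⟨0, hr⟩)
        omega
      · intro i
        show 1 ≤ k (e i) + if i = ⟨0, hr⟩ then s else 0
        have := hk (e i)
        split <;> omega
      · rw [hk']
        rw [Finset.sum_add_distrib, Equiv.sum_comp e k,
          Finset.sum_ite_eq' univ (⟨0, hr⟩ : Fin r) (fun _ => s), if_pos (Finset.mem_univ _)]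
        omega
    · rw [Tm_chain hr s D k e he, phi, Finsupp.sum_single_index (by simp)]
      rw [Int.cast_one, one_mul]
  · -- non-chain: graft
    obtain ⟨u, w, huw, hd, hprop⟩ := hD.exists_pair hc
    have hprop' : ∀ t, t ≠ w → t ≠ u → D t ⊆ D w ∨ D t ⊆ D u ∨ (D w ∪ D u) ⊆ D t ∨
        Disjoint (D t) (D w ∪ D u) := by
      intro t h1 h2
      rw [Finset.union_comm (D w) (D u)]
      rcases hprop t h2 h1 with h' | h' | h' | h'
      · exact Or.inr (Or.inl h')
      · exact Or.inl h'
      · exact Or.inr (Or.inr (Or.inl h'))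
      · exact Or.inr (Or.inr (Or.inr h'))
    have huwcomm : D w ∪ D u = D u ∪ D w := Finset.union_comm _ _
    have hnice1 : Nice (Function.update D w (D u ∪ D w)) := by
      rw [← huwcomm]
      exact hD.graft huw.symm hd.symm hprop'
    have hnice2 : Nice (Function.update D u (D u ∪ D w)) := hD.graft huw hd hprop
    -- cardinality bookkeeping
    have hcard_le : ∀ v, (D v).card ≤ r := fun v => by
      have := Finset.card_le_card (Finset.subset_univ (D v))
      simpa using this
    have hcard1 : ∑ v, ((Function.update D w (D u ∪ D w)) v).card
        = (∑ v, (D v).card) + (D u).card := by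
      have happ : ∀ v, ((Function.update D w (D u ∪ D w)) v).card
          = Function.update (fun v => (D v).card) w (D u ∪ D w).card v :=
        fun v => Function.apply_update (fun _ A => A.card) D w _ v
      rw [Finset.sum_congr rfl (fun v _ => happ v), Finset.sum_update_of_mem (Finset.mem_univ w),
        Finset.card_union_of_disjoint hd]
      simp only [← Finset.erase_eq]
      have hsplit : ∑ v, (D v).card = (D w).card + ∑ v ∈ univ.erase w, (D v).card :=
        (Finset.add_sum_erase univ (fun v => (D v).card) (Finset.mem_univ w)).symm
      omega
    have hcard2 : ∑ v, ((Function.update D u (D u ∪ D w)) v).card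
        = (∑ v, (D v).card) + (D w).card := by
      have happ : ∀ v, ((Function.update D u (D u ∪ D w)) v).card
          = Function.update (fun v => (D v).card) u (D u ∪ D w).card v :=
        fun v => Function.apply_update (fun _ A => A.card) D u _ v
      rw [Finset.sum_congr rfl (fun v _ => happ v), Finset.sum_update_of_mem (Finset.mem_univ u),
        Finset.card_union_of_disjoint hd]
      simp only [← Finset.erase_eq]
      have hsplit : ∑ v, (D v).card = (D u).card + ∑ v ∈ univ.erase u, (D v).card :=
        (Finset.add_sum_erase univ (fun v => (D v).card) (Finset.mem_univ u)).symm
      omega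
    have hDu1 : 1 ≤ (D u).card := Finset.card_pos.2 ⟨u, hD.mem u⟩
    have hDw1 : 1 ≤ (D w).card := Finset.card_pos.2 ⟨w, hD.mem w⟩
    have hbound1 : ∑ v, ((Function.update D w (D u ∪ D w)) v).card ≤ r * r := by
      calc ∑ v, ((Function.update D w (D u ∪ D w)) v).card
          ≤ ∑ _v : Fin r, r := Finset.sum_le_sum fun v _ => by
            have := Finset.card_le_card (Finset.subset_univ ((Function.update D w (D u ∪ D w)) v))
            simpa using this
        _ = r * r := by rw [Finset.sum_const, Finset.card_univ, Fintype.card_fin, smul_eq_mul]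
    have hbound2 : ∑ v, ((Function.update D u (D u ∪ D w)) v).card ≤ r * r := by
      calc ∑ v, ((Function.update D u (D u ∪ D w)) v).card
          ≤ ∑ _v : Fin r, r := Finset.sum_le_sum fun v _ => by
            have := Finset.card_le_card (Finset.subset_univ ((Function.update D u (D u ∪ D w)) v))
            simpa using this
        _ = r * r := by rw [Finset.sum_const, Finset.card_univ, Fintype.card_fin, smul_eq_mul]
    -- k sums
    have hksum1 : ∀ i, i < k u →
        ∑ v, (Function.update (Function.update k u (k u - i)) w (k w + i)) v = ∑ v, k v := by
      intro i hi
      rw [Finset.sum_update_of_mem (Finset.mem_univ w),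
        Finset.sum_update_of_mem (show u ∈ univ \ ({w} : Finset (Fin r)) by
          simp [Finset.mem_sdiff, huw])]
      simp only [← Finset.erase_eq]
      have hsplit : ∑ v, k v = k w + ∑ v ∈ univ.erase w, k v :=
        (Finset.add_sum_erase univ k (Finset.mem_univ w)).symm
      have hsplit2 : ∑ v ∈ univ.erase w, k v = k u + ∑ v ∈ (univ.erase w).erase u, k v :=
        (Finset.add_sum_erase _ k (Finset.mem_erase.2 ⟨huw, Finset.mem_univ u⟩)).symm
      omega
    have hksum2 : ∀ i, i < k w →
        ∑ v, (Function.update (Function.update k w (k w - i)) u (k u + i)) v = ∑ v, k v := by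
      intro i hi
      rw [Finset.sum_update_of_mem (Finset.mem_univ u),
        Finset.sum_update_of_mem (show w ∈ univ \ ({u} : Finset (Fin r)) by
          simp [Finset.mem_sdiff, huw.symm])]
      simp only [← Finset.erase_eq]
      have hsplit : ∑ v, k v = k u + ∑ v ∈ univ.erase u, k v :=
        (Finset.add_sum_erase univ k (Finset.mem_univ u)).symm
      have hsplit2 : ∑ v ∈ univ.erase u, k v = k w + ∑ v ∈ (univ.erase u).erase w, k v :=
        (Finset.add_sum_erase _ k (Finset.mem_erase.2 ⟨huw.symm, Finset.mem_univ w⟩)).symm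
      omega
    -- k positivity
    have hk1 : ∀ i, i < k u → ∀ v,
        1 ≤ (Function.update (Function.update k u (k u - i)) w (k w + i)) v := by
      intro i hi v
      by_cases hvw : v = w
      · rw [hvw, Function.update_self]; have := hk w; omega
      · rw [Function.update_of_ne hvw]
        by_cases hvu : v = u
        · rw [hvu, Function.update_self]; omega
        · rw [Function.update_of_ne hvu]; exact hk v
    have hk2 : ∀ i, i < k w → ∀ v,
        1 ≤ (Function.update (Function.update k w (k w - i)) u (k u + i)) v := by
      intro i hi v
      by_cases hvu : v = u
      · rw [hvu, Function.update_self]; have := hk u; omega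
      · rw [Function.update_of_ne hvu]
        by_cases hvw : v = w
        · rw [hvw, Function.update_self]; omega
        · rw [Function.update_of_ne hvw]; exact hk v
    -- apply IH
    have HC1 : ∀ i : ℕ, ∃ c : (Fin r → ℕ) →₀ ℤ, i < k u →
        ((∀ k' ∈ c.support, 2 ≤ k' ⟨0, hr⟩ ∧ (∀ j, 1 ≤ k' j) ∧ ∑ j, k' j = s + ∑ v, k v) ∧
         (∑' x, Tm (Function.update D w (D u ∪ D w))
            (Function.update (Function.update k u (k u - i)) w (k w + i)) s x) = phi r c) := by
      intro i
      by_cases hi : i < k u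
      · obtain ⟨c, h1, h2⟩ := IH (N - (D u).card) (by omega)
          (Function.update D w (D u ∪ D w))
          (Function.update (Function.update k u (k u - i)) w (k w + i))
          (by rw [hcard1]; omega) hnice1 (hk1 i hi)
        refine ⟨c, fun _ => ⟨?_, h2⟩⟩
        intro k' hk'
        obtain ⟨ha, hb, hw'⟩ := h1 k' hk'
        exact ⟨ha, hb, by rw [hw', hksum1 i hi]⟩
      · exact ⟨0, fun h => absurd h hi⟩
    have HC2 : ∀ i : ℕ, ∃ c : (Fin r → ℕ) →₀ ℤ, i < k w →
        ((∀ k' ∈ c.support, 2 ≤ k' ⟨0, hr⟩ ∧ (∀ j, 1 ≤ k' j) ∧ ∑ j, k' j = s + ∑ v, k v) ∧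
         (∑' x, Tm (Function.update D u (D u ∪ D w))
            (Function.update (Function.update k w (k w - i)) u (k u + i)) s x) = phi r c) := by
      intro i
      by_cases hi : i < k w
      · obtain ⟨c, h1, h2⟩ := IH (N - (D w).card) (by omega)
          (Function.update D u (D u ∪ D w))
          (Function.update (Function.update k w (k w - i)) u (k u + i))
          (by rw [hcard2]; omega) hnice2 (hk2 i hi)
        refine ⟨c, fun _ => ⟨?_, h2⟩⟩
        intro k' hk'
        obtain ⟨ha, hb, hw'⟩ := h1 k' hk'
        exact ⟨ha, hb, by rw [hw', hksum2 i hi]⟩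
      · exact ⟨0, fun h => absurd h hi⟩
    choose c1 hc1 using HC1
    choose c2 hc2 using HC2
    -- summability of the pieces
    have hsummable1 : ∀ i ∈ range (k u), Summable (fun x => ((k w + i - 1).choose i : ℝ) *
        Tm (Function.update D w (D u ∪ D w))
          (Function.update (Function.update k u (k u - i)) w (k w + i)) s x) := by
      intro i hi
      exact (summable_Tm hr _ _ s hnice1.mem (hk1 i (mem_range.1 hi)) hs).mul_left _
    have hsummable2 : ∀ i ∈ range (k w), Summable (fun x => ((k u + i - 1).choose i : ℝ) *
        Tm (Function.update D u (D u ∪ D w))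
          (Function.update (Function.update k w (k w - i)) u (k u + i)) s x) := by
      intro i hi
      exact (summable_Tm hr _ _ s hnice2.mem (hk2 i (mem_range.1 hi)) hs).mul_left _
    -- split the tsum
    have hpt : Tm D k s = fun x =>
        (∑ i ∈ range (k u), ((k w + i - 1).choose i : ℝ) *
          Tm (Function.update D w (D u ∪ D w))
            (Function.update (Function.update k u (k u - i)) w (k w + i)) s x)
        + (∑ i ∈ range (k w), ((k u + i - 1).choose i : ℝ) *
          Tm (Function.update D u (D u ∪ D w))
            (Function.update (Function.update k w (k w - i)) u (k u + i)) s x) :=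
      funext fun x => Tm_step s D k huw hd (hD.mem u) (hD.mem w) (hk u) x
    have hsumleft : Summable (fun x => ∑ i ∈ range (k u), ((k w + i - 1).choose i : ℝ) *
        Tm (Function.update D w (D u ∪ D w))
          (Function.update (Function.update k u (k u - i)) w (k w + i)) s x) :=
      summable_sum hsummable1
    have hsumright : Summable (fun x => ∑ i ∈ range (k w), ((k u + i - 1).choose i : ℝ) *
        Tm (Function.update D u (D u ∪ D w))
          (Function.update (Function.update k w (k w - i)) u (k u + i)) s x) :=
      summable_sum hsummable2
    refine ⟨(∑ i ∈ range (k u), ((k w + i - 1).choose i : ℤ) • c1 i)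
        + (∑ i ∈ range (k w), ((k u + i - 1).choose i : ℤ) • c2 i), ?_, ?_⟩
    · intro k' hk'
      rcases Finset.mem_union.1 (Finsupp.support_add hk') with h' | h'
      · obtain ⟨i, hi, hmem⟩ := Finset.mem_biUnion.1 (Finsupp.support_finset_sum h')
        have := Finsupp.support_smul hmem
        exact ((hc1 i (mem_range.1 hi)).1 k' this)
      · obtain ⟨i, hi, hmem⟩ := Finset.mem_biUnion.1 (Finsupp.support_finset_sum h')
        have := Finsupp.support_smul hmem
        exact ((hc2 i (mem_range.1 hi)).1 k' this)
    · rw [hpt, Summable.tsum_add hsumleft hsumright, Summable.tsum_finsetSum hsummable1, Summable.tsum_finsetSum hsummable2]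
      rw [phi_add, phi_finsum, phi_finsum]
      congr 1
      · apply Finset.sum_congr rfl
        intro i hi
        rw [tsum_mul_left, (hc1 i (mem_range.1 hi)).2, phi_smul]
        push_cast
        ring
      · apply Finset.sum_congr rfl
        intro i hi
        rw [tsum_mul_left, (hc2 i (mem_range.1 hi)).2, phi_smul]
        push_cast
        ring

theorem stmt4 (r : ℕ) (hr : 1 ≤ r) (s : ℕ) (hs : 1 ≤ s)
    (s' : Fin r → ℕ) (hs1 : ∀ i, 1 ≤ s' i) (hmono : Monotone s') :
    Summable (MTterm r s' s) ∧
    ∃ (S : Finset (Fin r → ℕ)) (c : (Fin r → ℕ) → ℤ),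
      (∀ k ∈ S, 2 ≤ k ⟨0, hr⟩ ∧ (∀ i, 1 ≤ k i) ∧ ∑ i, k i = s + ∑ i, s' i) ∧
      (∑' n, MTterm r s' s n) = ∑ k ∈ S, (c k : ℝ) * MZV r k := by
  have hsing : Nice (fun v : Fin r => ({v} : Finset (Fin r))) := by
    constructor
    · exact fun v => Finset.mem_singleton_self v
    · intro a b hab
      rw [Finset.mem_singleton.1 hab]
    · intro a b
      by_cases hab : a = b
      · exact Or.inl (by rw [hab])
      · exact Or.inr (Or.inr (Finset.disjoint_singleton.2 hab))
    · intro a b hab _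
      exact Finset.mem_singleton.1 hab
  have hTm : MTterm r s' s = Tm (fun v : Fin r => ({v} : Finset (Fin r))) s' s := by
    funext x
    rw [MTterm, Tm, one_div, mul_inv]
    congr 2
    · apply Finset.prod_congr rfl
      intro v _
      rw [sg, Finset.sum_singleton]
  have hmem : ∀ v : Fin r, v ∈ ({v} : Finset (Fin r)) := fun v => Finset.mem_singleton_self v
  have hsummable : Summable (MTterm r s' s) := by
    rw [hTm]
    exact summable_Tm hr _ _ s hmem hs1 hs
  refine ⟨hsummable, ?_⟩
  have hcards : ∑ v : Fin r, ({v} : Finset (Fin r)).card = r := by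
    simp
  have hrr : r ≤ r * r := Nat.le_mul_of_pos_left r (by omega)
  obtain ⟨c, hc1, hc2⟩ := reduce hr s hs (r * r - r) (fun v => ({v} : Finset (Fin r))) s'
    (by rw [hcards]; omega) hsing hs1
  refine ⟨c.support, fun k => c k, hc1, ?_⟩
  rw [hTm, hc2, phi, Finsupp.sum]
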